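/- Assume k ≤ n − 3 and let λ : {1,…,n} × {0,1} → F be injective. Let R ⊆ {3,…,n} be a set with |R| = k + 1. If c and c' are codewords of C(n,k,2,3,λ) such that c(i,1,a) + c(i,2,a(1,a_1⊕1)) = c'(i,1,a) + c'(i,2,a(1,a_1⊕1)) for every i ∈ R and every a ∈ {0,1}^n, then: (1) c(1,b,a) = c'(1,b,a) for every b ∈ {1,2} and every a ∈ {0,1}^n, and (2) c(2,1,a) + c(2,2,a(1,a_1⊕1)) = c'(2,1,a) + c'(2,2,a(1,a_1⊕1)) for every a ∈ {0,1}^n. -/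
import Mathlib

open Polynomial in
lemma vand_zero {F : Type*} [Field F] {ι : Type*} [DecidableEq ι]
    (S : Finset ι) (x : ι → F) (hx : Set.InjOn x S) (v : ι → F)
    (h : ∀ t < S.card, ∑ i ∈ S, x i ^ t * v i = 0) :
    ∀ j ∈ S, v j = 0 := by
  intro j hj
  set L := Lagrange.basis S x j with hL
  have hdeg : L.natDegree = S.card - 1 := Lagrange.natDegree_basis hx hj
  have hcard : 0 < S.card := Finset.card_pos.mpr ⟨j, hj⟩
  have key : ∀ i ∈ S, L.eval (x i) = if i = j then 1 else 0 := by
    intro i hi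
    split_ifs with hij
    · subst hij; exact Lagrange.eval_basis_self hx hj
    · exact Lagrange.eval_basis_of_ne (fun h => hij h.symm) hi
  have : v j = ∑ i ∈ S, L.eval (x i) * v i := by
    rw [Finset.sum_congr rfl fun i hi => by rw [key i hi]]
    simp [hj]
  rw [this]
  have heval : ∀ y : F, L.eval y = ∑ t ∈ Finset.range S.card, L.coeff t * y ^ t := by
    intro y
    rw [Polynomial.eval_eq_sum_range' (lt_of_le_of_lt hdeg.le (Nat.sub_lt hcard one_pos))]
  calc ∑ i ∈ S, L.eval (x i) * v i
      = ∑ i ∈ S, ∑ t ∈ Finset.range S.card, L.coeff t * (x i ^ t * v i) := by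
        refine Finset.sum_congr rfl fun i _ => ?_
        rw [heval, Finset.sum_mul]
        exact Finset.sum_congr rfl fun t _ => by ring
    _ = ∑ t ∈ Finset.range S.card, L.coeff t * ∑ i ∈ S, x i ^ t * v i := by
        rw [Finset.sum_comm]
        exact Finset.sum_congr rfl fun t _ => by rw [Finset.mul_sum]
    _ = 0 := by
        refine Finset.sum_eq_zero fun t ht => ?_
        rw [h t (Finset.mem_range.mp ht), mul_zero]



/-- The code `C(n,k,s,m,λ)`: an array `c : {1,…,n} × {1,…,m} × {0,…,s-1}^n → F`
(node index `i : Fin n`, block index `b ∈ {1,…,m}` as a natural number,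
`a : Fin n → Fin s`) satisfying the parity-check equations
`∑_{i=1}^n λ(i,a_i)^t · c(i,b,a) = 0` for all `t ∈ {0,…,n-k-1}`,
`b ∈ {1,…,m}` and `a ∈ {0,…,s-1}^n`. -/
def IsCodeword {F : Type*} [Field F] {n : ℕ} (k s m : ℕ)
    (lam : Fin n → Fin s → F) (c : Fin n → ℕ → (Fin n → Fin s) → F) : Prop :=
  ∀ t < n - k, ∀ b ∈ Finset.Icc 1 m, ∀ a : Fin n → Fin s,
    ∑ i, lam i (a i) ^ t * c i b a = 0

/-- first-round recovery at node 1 in `C(n,k,2,3,λ)`.  Nodes 1 and 2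
of the paper are `i1, i2 : Fin n` with indices `0, 1`; the helper set
`R ⊆ {3,…,n}` consists of nodes with index `≥ 2`, and `|R| = k+1`.  If the
downloaded sums `c(i,1,a) + c(i,2,a(1,a₁⊕1))` for `i ∈ R` agree for two
codewords, then (1) the coordinates `(1,b,a)`, `b ∈ {1,2}`, agree, and (2) the
sums at node 2 agree. -/
theorem stmt_3 {F : Type*} [Field F] (n k : ℕ) (hk : 1 ≤ k) (hkn : k + 3 ≤ n)
    (lam : Fin n → Fin 2 → F)
    (hlam : Function.Injective fun p : Fin n × Fin 2 => lam p.1 p.2)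
    (i1 i2 : Fin n) (hi1 : (i1 : ℕ) = 0) (hi2 : (i2 : ℕ) = 1)
    (R : Finset (Fin n)) (hR : ∀ i ∈ R, 2 ≤ (i : ℕ)) (hRcard : R.card = k + 1)
    (c c' : Fin n → ℕ → (Fin n → Fin 2) → F)
    (hc : IsCodeword k 2 3 lam c) (hc' : IsCodeword k 2 3 lam c')
    (heq : ∀ i ∈ R, ∀ a : Fin n → Fin 2,
      c i 1 a + c i 2 (Function.update a i1 (a i1 + 1))
        = c' i 1 a + c' i 2 (Function.update a i1 (a i1 + 1))) :
    (∀ b ∈ Finset.Icc 1 2, ∀ a : Fin n → Fin 2, c i1 b a = c' i1 b a) ∧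
    (∀ a : Fin n → Fin 2,
      c i2 1 a + c i2 2 (Function.update a i1 (a i1 + 1))
        = c' i2 1 a + c' i2 2 (Function.update a i1 (a i1 + 1))) := by
  classical
  set d : Fin n → ℕ → (Fin n → Fin 2) → F := fun i b A => c i b A - c' i b A with hd
  have hfin2 : ∀ u : Fin 2, u + 1 ≠ u := by decide
  have hi1R : i1 ∉ R := fun h => by have := hR i1 h; omega
  have hi2R : i2 ∉ R := fun h => by have := hR i2 h; omega
  have hi12 : i2 ≠ i1 := fun h => by rw [h, hi1] at hi2; omega
  have key : ∀ a : Fin n → Fin 2,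
      d i1 1 a = 0 ∧ d i1 2 (Function.update a i1 (a i1 + 1)) = 0 ∧
      d i2 1 a + d i2 2 (Function.update a i1 (a i1 + 1)) = 0 := by
    intro a
    set a' := Function.update a i1 (a i1 + 1) with ha'def
    have ha'1 : a' i1 = a i1 + 1 := Function.update_self _ _ _
    have ha'ne : ∀ i, i ≠ i1 → a' i = a i := fun i h => Function.update_of_ne h _ _
    set v : Fin n × Fin 2 → F := fun p =>
      (if p.2 = a p.1 then d p.1 1 a else 0) + (if p.2 = a' p.1 then d p.1 2 a' else 0)
      with hv
    have hv1 : v (i1, a i1) = d i1 1 a := by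
      simp only [hv, if_true]
      rw [if_neg (fun h : a i1 = a' i1 => hfin2 (a i1) (ha'1 ▸ h).symm), add_zero]
    have hv2 : v (i1, a i1 + 1) = d i1 2 a' := by
      simp only [hv]
      rw [if_neg (hfin2 (a i1)), if_pos ha'1.symm, zero_add]
    have hv3 : ∀ i, i ≠ i1 → v (i, a i) = d i 1 a + d i 2 a' := by
      intro i h
      simp only [hv, if_true]
      rw [if_pos (ha'ne i h).symm]
    have hinj : Function.Injective fun i : Fin n => (i, a i) :=
      fun i j h => congrArg Prod.fst h
    have hnotmem : (i1, a i1 + 1) ∉ Rᶜ.image fun i => (i, a i) := by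
      intro hmem
      obtain ⟨i, _, hi⟩ := Finset.mem_image.mp hmem
      obtain ⟨h1, h2⟩ := Prod.mk.injEq .. ▸ hi
      exact hfin2 (a i1) (h1 ▸ h2).symm
    set S : Finset (Fin n × Fin 2) :=
      insert (i1, a i1 + 1) (Rᶜ.image fun i => (i, a i)) with hS
    have hScard : S.card = n - k := by
      rw [hS, Finset.card_insert_of_notMem hnotmem,
        Finset.card_image_of_injective _ hinj, Finset.card_compl, hRcard]
      simp only [Fintype.card_fin]
      omega
    have hsum : ∀ t < S.card, ∑ p ∈ S, lam p.1 p.2 ^ t * v p = 0 := by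
      intro t ht
      rw [hScard] at ht
      have hb1 : (1 : ℕ) ∈ Finset.Icc 1 3 := by decide
      have hb2 : (2 : ℕ) ∈ Finset.Icc 1 3 := by decide
      have h1 : ∑ i, lam i (a i) ^ t * d i 1 a = 0 := by
        have e1 := hc t ht 1 hb1 a
        have e2 := hc' t ht 1 hb1 a
        simp only [hd, mul_sub, Finset.sum_sub_distrib, e1, e2, sub_zero]
      have h2 : ∑ i, lam i (a' i) ^ t * d i 2 a' = 0 := by
        have e1 := hc t ht 2 hb2 a'
        have e2 := hc' t ht 2 hb2 a'
        simp only [hd, mul_sub, Finset.sum_sub_distrib, e1, e2, sub_zero]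
      set f : Fin n → F := fun i =>
        lam i (a i) ^ t * d i 1 a + lam i (a' i) ^ t * d i 2 a' with hf
      have hfuniv : ∑ i, f i = 0 := by
        rw [hf]; rw [Finset.sum_add_distrib, h1, h2, add_zero]
      have hfR : ∑ i ∈ R, f i = 0 := by
        refine Finset.sum_eq_zero fun i hi => ?_
        have hne : i ≠ i1 := fun h => hi1R (h ▸ hi)
        have h5 := heq i hi a
        rw [← ha'def] at h5
        simp only [hf, hd, ha'ne i hne]
        linear_combination (lam i (a i) ^ t) * h5
      have hfC : ∑ i ∈ Rᶜ, f i = 0 := by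
        have := Finset.sum_add_sum_compl R f
        rw [hfR, hfuniv, zero_add] at this
        exact this
      have hterm : ∀ i ∈ Rᶜ, f i = lam i (a i) ^ t * v (i, a i)
          + (if i = i1 then lam i1 (a i1 + 1) ^ t * v (i1, a i1 + 1) else 0) := by
        intro i _
        by_cases hne : i = i1
        · simp only [hf]
          rw [hne, if_pos rfl, hv1, hv2, ha'1]
        · rw [if_neg hne, add_zero, hv3 i hne]
          simp only [hf, ha'ne i hne]
          ring
      rw [hS, Finset.sum_insert hnotmem, Finset.sum_image (fun i _ j _ h => hinj h)]
      rw [Finset.sum_congr rfl hterm, Finset.sum_add_distrib] at hfC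
      rw [Finset.sum_ite_eq' Rᶜ i1 (fun _ => lam i1 (a i1 + 1) ^ t * v (i1, a i1 + 1)),
        if_pos (Finset.mem_compl.mpr hi1R)] at hfC
      linear_combination hfC
    have hz := vand_zero S (fun p => lam p.1 p.2)
      (fun p _ q _ h => hlam h) v hsum
    have hm1 : (i1, a i1) ∈ S := by
      rw [hS]
      exact Finset.mem_insert_of_mem
        (Finset.mem_image_of_mem _ (Finset.mem_compl.mpr hi1R))
    have hm2 : (i1, a i1 + 1) ∈ S := Finset.mem_insert_self _ _
    have hm3 : (i2, a i2) ∈ S := by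
      rw [hS]
      exact Finset.mem_insert_of_mem
        (Finset.mem_image_of_mem _ (Finset.mem_compl.mpr hi2R))
    have e1 := hz _ hm1
    have e2 := hz _ hm2
    have e3 := hz _ hm3
    rw [hv1] at e1
    rw [hv2] at e2
    rw [hv3 i2 hi12] at e3
    exact ⟨e1, e2, e3⟩
  have hinv : ∀ a : Fin n → Fin 2,
      Function.update (Function.update a i1 (a i1 + 1)) i1
        ((Function.update a i1 (a i1 + 1)) i1 + 1) = a := by
    intro a
    rw [Function.update_self, Function.update_idem]
    have h2 : ∀ u : Fin 2, u + 1 + 1 = u := by decide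
    rw [h2, Function.update_eq_self]
  have hsub : ∀ i b A, d i b A = 0 → c i b A = c' i b A := by
    intro i b A h
    have h' : c i b A - c' i b A = 0 := h
    linear_combination h'
  constructor
  · intro b hb a
    have hb' : b = 1 ∨ b = 2 := by
      simp only [Finset.mem_Icc] at hb; omega
    rcases hb' with rfl | rfl
    · exact hsub _ _ _ (key a).1
    · have := (key (Function.update a i1 (a i1 + 1))).2.1
      rw [hinv a] at this
      exact hsub _ _ _ this
  · intro a
    have h6 := (key a).2.2
    simp only [hd] at h6
    linear_combination h6
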